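/- arXiv:1110.4733 — 7 statements merged into one kernel-verified Lean document; each statement's English description precedes it below -/
import Mathlib

section
/- Let E be a complex inner product space and let u₁, u₂ ∈ E be nonzero vectors. Writing û = u/‖u‖ for the normalization of a nonzero vector u, one has ‖ ‖u₂‖ • û₁ − ‖u₁‖ • û₂ ‖ = ‖u₂ − u₁‖. -/
/-- For nonzero vectors `u₁, u₂` in a complex inner product space, with `û = ‖u‖⁻¹ • u`
the normalization, one has `‖‖u₂‖ • û₁ - ‖u₁‖ • û₂‖ = ‖u₂ - u₁‖`. -/
theorem norm_smul_normalized_sub (E : Type*) [NormedAddCommGroup E] [InnerProductSpace ℂ E]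
    (u₁ u₂ : E) (h₁ : u₁ ≠ 0) (h₂ : u₂ ≠ 0) :
    ‖‖u₂‖ • (‖u₁‖⁻¹ • u₁) - ‖u₁‖ • (‖u₂‖⁻¹ • u₂)‖ = ‖u₂ - u₁‖ := by
  letI : InnerProductSpace ℝ E := InnerProductSpace.rclikeToReal ℂ E
  have n₁ : ‖u₁‖ ≠ 0 := norm_ne_zero_iff.mpr h₁
  have n₂ : ‖u₂‖ ≠ 0 := norm_ne_zero_iff.mpr h₂
  rw [← Real.sqrt_sq (norm_nonneg _), ← Real.sqrt_sq (norm_nonneg (u₂ - u₁))]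
  congr 1
  rw [norm_sub_sq_real, norm_sub_sq_real]
  simp only [real_inner_smul_left, real_inner_smul_right, norm_smul, Real.norm_eq_abs,
    abs_of_nonneg (norm_nonneg _), abs_of_nonneg (inv_nonneg.mpr (norm_nonneg _))]
  rw [real_inner_comm u₂ u₁]
  field_simp
end

section
/- Let (X, μ) be a measure space, m ≥ 1 an integer, and let u₁, u₂ : X → ℂᵐ be square-integrable measurable functions. Let σ₁, σ₂ : X → ℝ be measurable functions with 0 < σⱼ(x) ≤ σ_M for a.e. x ∈ X (j = 1, 2), and let α > σ_M be a constant. Assume the coercivity inequality Re ∫_X ⟨σ₁(x)u₁(x) − σ₂(x)u₂(x), u₁(x) − u₂(x)⟩ dμ(x) ≥ α ∫_X ‖u₁(x) − u₂(x)‖² dμ(x). If σ₁(x)‖u₁(x)‖² = σ₂(x)‖u₂(x)‖² for a.e. x ∈ X, then u₁ = u₂ a.e. in X, and σ₁(x) = σ₂(x) for a.e. x in the set where σ₁(x)‖u₁(x)‖² > 0. -/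
open MeasureTheory

-- pointwise algebraic lemma
lemma ptwise {E : Type*} [NormedAddCommGroup E] [InnerProductSpace ℂ E]
    (v w : E) (s₁ s₂ sM : ℝ) (h1 : 0 < s₁) (h1' : s₁ ≤ sM) (h2 : 0 < s₂) (h2' : s₂ ≤ sM)
    (hH : s₁ * ‖v‖ ^ 2 = s₂ * ‖w‖ ^ 2) :
    (inner ℂ (s₁ • v - s₂ • w) (v - w) : ℂ).re ≤ sM * ‖v - w‖ ^ 2 := by
  have e1 : (s₁ : ℂ) • v = s₁ • v := by simp [Complex.coe_smul]
  have expand : (inner ℂ (s₁ • v - s₂ • w) (v - w) : ℂ).re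
      = s₁ * ‖v‖ ^ 2 - (s₁ + s₂) * (inner ℂ v w : ℂ).re + s₂ * ‖w‖ ^ 2 := by
    rw [← Complex.coe_smul, ← Complex.coe_smul]
    simp only [inner_sub_left, inner_sub_right, inner_smul_left, Complex.sub_re, Complex.mul_re,
      Complex.conj_re, Complex.conj_im, Complex.ofReal_re, Complex.ofReal_im]
    have hvv : (inner ℂ v v : ℂ).re = ‖v‖ ^ 2 := by
      have := @inner_self_eq_norm_sq ℂ _ _ _ _ v
      simpa [← RCLike.re_eq_complex_re] using this
    have hww : (inner ℂ w w : ℂ).re = ‖w‖ ^ 2 := by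
      have := @inner_self_eq_norm_sq ℂ _ _ _ _ w
      simpa [← RCLike.re_eq_complex_re] using this
    have hsym : (inner ℂ w v : ℂ).re = (inner ℂ v w : ℂ).re := by
      have := @inner_re_symm ℂ _ _ _ _ w v
      simpa [← RCLike.re_eq_complex_re] using this
    rw [hvv, hww, hsym]
    ring
  have hnorm : ‖v - w‖ ^ 2 = ‖v‖ ^ 2 - 2 * (inner ℂ v w : ℂ).re + ‖w‖ ^ 2 := by
    have := @norm_sub_sq ℂ _ _ _ _ v w
    simpa [← RCLike.re_eq_complex_re] using this
  rw [expand, hnorm]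
  set a := ‖v‖ ^ 2 with ha
  set b := ‖w‖ ^ 2 with hb
  set c := (inner ℂ v w : ℂ).re with hc
  have ha0 : 0 ≤ a := by positivity
  have hb0 : 0 ≤ b := by positivity
  have hvw : 0 ≤ a - 2 * c + b := by rw [← hnorm]; positivity
  nlinarith [mul_nonneg (by linarith : (0:ℝ) ≤ 2 * sM - s₁ - s₂) hvw,
    mul_nonneg ha0 (sq_nonneg (s₁ - s₂)), mul_pos h1 h2, sq_nonneg (s₁ - s₂)]

/-- Uniqueness for internal measurements `H = σ‖u‖²` under a spectral-gap/coercivity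
condition: if `σ₁‖u₁‖² = σ₂‖u₂‖²` a.e., then `u₁ = u₂` a.e. and `σ₁ = σ₂` a.e. on the
set where the measurement is positive. -/
theorem uniqueness_from_quadratic_internal_data
    {X : Type*} [MeasurableSpace X] (μ : Measure X) (m : ℕ) (hm : 1 ≤ m)
    (u₁ u₂ : X → EuclideanSpace ℂ (Fin m))
    (hu₁ : MemLp u₁ 2 μ) (hu₂ : MemLp u₂ 2 μ)
    (σ₁ σ₂ : X → ℝ) (hσ₁m : Measurable σ₁) (hσ₂m : Measurable σ₂)
    (σM : ℝ)
    (hσ₁ : ∀ᵐ x ∂μ, 0 < σ₁ x ∧ σ₁ x ≤ σM)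
    (hσ₂ : ∀ᵐ x ∂μ, 0 < σ₂ x ∧ σ₂ x ≤ σM)
    (α : ℝ) (hα : σM < α)
    (hcoer : α * ∫ x, ‖u₁ x - u₂ x‖ ^ 2 ∂μ ≤
      (∫ x, (inner ℂ (σ₁ x • u₁ x - σ₂ x • u₂ x) (u₁ x - u₂ x) : ℂ) ∂μ).re)
    (hH : ∀ᵐ x ∂μ, σ₁ x * ‖u₁ x‖ ^ 2 = σ₂ x * ‖u₂ x‖ ^ 2) :
    u₁ =ᵐ[μ] u₂ ∧ (∀ᵐ x ∂μ, 0 < σ₁ x * ‖u₁ x‖ ^ 2 → σ₁ x = σ₂ x) := by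
  have hv : MemLp (fun x => u₁ x - u₂ x) 2 μ := hu₁.sub hu₂
  -- integrability of ‖v‖²
  have hI : Integrable (fun x => ‖u₁ x - u₂ x‖ ^ 2) μ := hv.norm.integrable_sq
  have hI0 : 0 ≤ ∫ x, ‖u₁ x - u₂ x‖ ^ 2 ∂μ :=
    integral_nonneg fun x => by positivity
  -- σⱼ bounded, hence σⱼ • uⱼ ∈ L²
  have hσ₁top : MemLp σ₁ ⊤ μ :=
    memLp_top_of_bound hσ₁m.aestronglyMeasurable |σM|
      (by filter_upwards [hσ₁] with x hx
          rw [Real.norm_eq_abs, abs_of_pos hx.1]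
          exact hx.2.trans (le_abs_self σM))
  have hσ₂top : MemLp σ₂ ⊤ μ :=
    memLp_top_of_bound hσ₂m.aestronglyMeasurable |σM|
      (by filter_upwards [hσ₂] with x hx
          rw [Real.norm_eq_abs, abs_of_pos hx.1]
          exact hx.2.trans (le_abs_self σM))
  have hg : MemLp (fun x => σ₁ x • u₁ x - σ₂ x • u₂ x) 2 μ :=
    (hu₁.smul hσ₁top).sub (hu₂.smul hσ₂top)
  -- integrability of the inner product
  have hmul : Integrable (fun x => ‖σ₁ x • u₁ x - σ₂ x • u₂ x‖ * ‖u₁ x - u₂ x‖) μ := by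
    rw [← memLp_one_iff_integrable]
    have := (hv.norm).smul (hg.norm) (r := 1)
    simpa [Pi.smul_apply, smul_eq_mul, Pi.mul_def] using this
  have hf : Integrable (fun x => (inner ℂ (σ₁ x • u₁ x - σ₂ x • u₂ x) (u₁ x - u₂ x) : ℂ)) μ := by
    refine Integrable.mono' hmul (hg.aestronglyMeasurable.inner hv.aestronglyMeasurable) ?_
    exact Filter.Eventually.of_forall fun x => norm_inner_le_norm _ _
  -- re of the integral = integral of the re
  have hre : (∫ x, (inner ℂ (σ₁ x • u₁ x - σ₂ x • u₂ x) (u₁ x - u₂ x) : ℂ) ∂μ).re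
      = ∫ x, (inner ℂ (σ₁ x • u₁ x - σ₂ x • u₂ x) (u₁ x - u₂ x) : ℂ).re ∂μ :=
    (integral_re hf).symm
  -- pointwise bound a.e.
  have hpt : ∀ᵐ x ∂μ, (inner ℂ (σ₁ x • u₁ x - σ₂ x • u₂ x) (u₁ x - u₂ x) : ℂ).re
      ≤ σM * ‖u₁ x - u₂ x‖ ^ 2 := by
    filter_upwards [hσ₁, hσ₂, hH] with x h1 h2 hHx
    exact ptwise (u₁ x) (u₂ x) (σ₁ x) (σ₂ x) σM h1.1 h1.2 h2.1 h2.2 hHx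
  have hbound : (∫ x, (inner ℂ (σ₁ x • u₁ x - σ₂ x • u₂ x) (u₁ x - u₂ x) : ℂ) ∂μ).re
      ≤ σM * ∫ x, ‖u₁ x - u₂ x‖ ^ 2 ∂μ := by
    rw [hre, ← integral_const_mul]
    exact integral_mono_ae hf.re (hI.const_mul σM) hpt
  have hIzero : ∫ x, ‖u₁ x - u₂ x‖ ^ 2 ∂μ = 0 := by
    nlinarith [hcoer.trans hbound]
  have hveq : ∀ᵐ x ∂μ, ‖u₁ x - u₂ x‖ ^ 2 = 0 := by
    have := (integral_eq_zero_iff_of_nonneg (fun x => by positivity) hI).mp hIzero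
    filter_upwards [this] with x hx using hx
  have huv : u₁ =ᵐ[μ] u₂ := by
    filter_upwards [hveq] with x hx
    have : ‖u₁ x - u₂ x‖ = 0 := by nlinarith [norm_nonneg (u₁ x - u₂ x)]
    exact sub_eq_zero.mp (norm_eq_zero.mp this)
  refine ⟨huv, ?_⟩
  filter_upwards [huv, hH, hσ₁, hσ₂] with x hx hHx h1 h2 hpos
  rw [hx] at hHx hpos
  have hn : 0 < ‖u₂ x‖ ^ 2 := by
    by_contra h
    push_neg at h
    have : ‖u₂ x‖ ^ 2 = 0 := le_antisymm h (by positivity)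
    rw [this] at hpos; simp at hpos
  have := mul_right_cancel₀ (ne_of_gt hn) hHx
  exact this
end

section
/- Let Ω ⊆ ℝⁿ be open, let σ : Ω → ℝ be continuously differentiable with σ > 0 on Ω, and let u : Ω → ℝ be twice continuously differentiable with ∇u(x) ≠ 0 for every x ∈ Ω and ∇·(σ∇u) = 0 on Ω. Define H := σ|∇u|². Then at every x ∈ Ω: ∑_{i,j} ( δᵢⱼ − 2 (∂ᵢu)(∂ⱼu)/|∇u|² ) ∂²ᵢⱼu + ∇(log H) · ∇u = 0. -/
/-- Partial derivative `∂f/∂xᵢ` of a scalar function on Euclidean space. -/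
noncomputable def pderiv' {n : ℕ} (f : EuclideanSpace ℝ (Fin n) → ℝ) (i : Fin n)
    (x : EuclideanSpace ℝ (Fin n)) : ℝ :=
  fderiv ℝ f x (EuclideanSpace.single i 1)

/-- Gradient of a scalar function on Euclidean space. -/
noncomputable def grad' {n : ℕ} (f : EuclideanSpace ℝ (Fin n) → ℝ)
    (x : EuclideanSpace ℝ (Fin n)) : EuclideanSpace ℝ (Fin n) :=
  (EuclideanSpace.equiv (Fin n) ℝ).symm fun i => pderiv' f i x

/-- Divergence `∇·F = ∑ᵢ ∂Fᵢ/∂xᵢ` of a vector field on Euclidean space. -/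
noncomputable def diverg {n : ℕ} (F : EuclideanSpace ℝ (Fin n) → EuclideanSpace ℝ (Fin n))
    (x : EuclideanSpace ℝ (Fin n)) : ℝ :=
  ∑ i, pderiv' (fun y => F y i) i x

section Helpers
variable {n : ℕ} {f g : EuclideanSpace ℝ (Fin n) → ℝ} {x : EuclideanSpace ℝ (Fin n)} {i : Fin n}

lemma pderiv'_mul (hf : DifferentiableAt ℝ f x) (hg : DifferentiableAt ℝ g x) :
    pderiv' (fun y => f y * g y) i x = pderiv' f i x * g x + f x * pderiv' g i x := by
  unfold pderiv'; rw [fderiv_fun_mul hf hg]; simp; ring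

lemma pderiv'_sum {ι : Type*} (s : Finset ι) (F : ι → EuclideanSpace ℝ (Fin n) → ℝ)
    (h : ∀ j ∈ s, DifferentiableAt ℝ (F j) x) :
    pderiv' (fun y => ∑ j ∈ s, F j y) i x = ∑ j ∈ s, pderiv' (F j) i x := by
  unfold pderiv'; rw [fderiv_fun_sum h]; simp

lemma pderiv'_sq (hf : DifferentiableAt ℝ f x) :
    pderiv' (fun y => f y ^ 2) i x = 2 * f x * pderiv' f i x := by
  have : (fun y => f y ^ 2) = fun y => f y * f y := by ext y; ring
  rw [this, pderiv'_mul hf hf]; ring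

lemma pderiv'_log (hf : DifferentiableAt ℝ f x) (h0 : f x ≠ 0) :
    pderiv' (fun y => Real.log (f y)) i x = pderiv' f i x / f x := by
  have h := (Real.hasDerivAt_log h0).comp_hasFDerivAt x hf.hasFDerivAt
  have h' : HasFDerivAt (fun y => Real.log (f y)) ((f x)⁻¹ • fderiv ℝ f x) x := h
  unfold pderiv'
  rw [h'.fderiv]
  simp [div_eq_inv_mul]

lemma norm_grad_sq (u : EuclideanSpace ℝ (Fin n) → ℝ) (y : EuclideanSpace ℝ (Fin n)) :
    ‖grad' u y‖ ^ 2 = ∑ j, (pderiv' u j y) ^ 2 := by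
  rw [EuclideanSpace.norm_eq, Real.sq_sqrt (by positivity)]
  simp [grad', sq_abs]

lemma grad'_apply (u : EuclideanSpace ℝ (Fin n) → ℝ) (y : EuclideanSpace ℝ (Fin n)) (j : Fin n) :
    grad' u y j = pderiv' u j y := rfl

lemma inner_grad' (u : EuclideanSpace ℝ (Fin n) → ℝ) (y : EuclideanSpace ℝ (Fin n)) :
    (inner ℝ (grad' f y) (grad' u y) : ℝ) = ∑ j, pderiv' f j y * pderiv' u j y := by
  simp [grad', PiLp.inner_apply, mul_comm]

end Helpers

/-- The 0-Laplacian identity of UMEIT: if `∇·(σ∇u) = 0`, `σ > 0` and `∇u ≠ 0` on `Ω`,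
then with `H := σ|∇u|²` one has
`∑_{i,j} (δᵢⱼ − 2 ∂ᵢu ∂ⱼu / |∇u|²) ∂²ᵢⱼ u + ∇(log H)·∇u = 0` on `Ω`. -/
theorem zero_laplacian_hyperbolic_form {n : ℕ} (Ω : Set (EuclideanSpace ℝ (Fin n)))
    (hΩ : IsOpen Ω) (σ u : EuclideanSpace ℝ (Fin n) → ℝ)
    (hσ : ContDiffOn ℝ 1 σ Ω) (hσpos : ∀ x ∈ Ω, 0 < σ x)
    (hu : ContDiffOn ℝ 2 u Ω) (hgrad : ∀ x ∈ Ω, grad' u x ≠ 0)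
    (hdiv : ∀ x ∈ Ω, diverg (fun y => σ y • grad' u y) x = 0) :
    ∀ x ∈ Ω,
      (∑ i, ∑ j, ((if i = j then (1 : ℝ) else 0)
            - 2 * pderiv' u i x * pderiv' u j x / ‖grad' u x‖ ^ 2)
          * pderiv' (pderiv' u j) i x)
        + (inner ℝ (grad' (fun y => Real.log (σ y * ‖grad' u y‖ ^ 2)) x) (grad' u x) : ℝ)
        = 0 := by

  intro x hx
  have hxΩ : Ω ∈ nhds x := hΩ.mem_nhds hx
  have hσd : DifferentiableAt ℝ σ x := ((hσ.contDiffAt hxΩ).differentiableAt one_ne_zero)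
  have hu2 : ContDiffAt ℝ 2 u x := hu.contDiffAt hxΩ
  -- differentiability of partial derivatives of u
  have hpd : ∀ j : Fin n, DifferentiableAt ℝ (pderiv' u j) x := by
    intro j
    have h1 : ContDiffAt ℝ 1 (fderiv ℝ u) x := hu2.fderiv_right (by norm_num)
    have h2 : ContDiffAt ℝ 1 (fun y => fderiv ℝ u y (EuclideanSpace.single j 1)) x :=
      h1.clm_apply contDiffAt_const
    exact h2.differentiableAt one_ne_zero
  set a : Fin n → ℝ := fun i => pderiv' u i x with ha
  set b : Fin n → ℝ := fun i => pderiv' σ i x with hb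
  set c : Fin n → Fin n → ℝ := fun i j => pderiv' (pderiv' u j) i x with hc
  have hS : ‖grad' u x‖ ^ 2 = ∑ j, a j ^ 2 := norm_grad_sq u x
  set S : ℝ := ∑ j, a j ^ 2 with hSdef
  have hSpos : 0 < S := by
    rw [← hS]; exact pow_pos (norm_pos_iff.2 (hgrad x hx)) 2
  have hσx : (0:ℝ) < σ x := hσpos x hx
  -- divergence equation
  have hA : ∑ i, (b i * a i + σ x * c i i) = 0 := by
    have h0 : ∑ i, pderiv' (fun y => (σ y • grad' u y) i) i x = 0 := hdiv x hx
    have heq : ∀ i : Fin n, pderiv' (fun y => (σ y • grad' u y) i) i x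
        = pderiv' (fun y => σ y * pderiv' u i y) i x := fun i => rfl
    rw [Finset.sum_congr rfl (fun i _ => heq i)] at h0
    rw [Finset.sum_congr rfl (fun i _ => pderiv'_mul hσd (hpd i))] at h0
    exact h0
  -- derivative of the squared gradient norm
  have hNd : DifferentiableAt ℝ (fun y => ∑ j, pderiv' u j y ^ 2) x :=
    DifferentiableAt.fun_sum (fun j _ => (hpd j).pow 2)
  have hNder : ∀ i : Fin n, pderiv' (fun y => ∑ j, pderiv' u j y ^ 2) i x
      = ∑ j, 2 * a j * c i j := by
    intro i
    rw [pderiv'_sum _ (fun j y => pderiv' u j y ^ 2) (fun j _ => (hpd j).pow 2)]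
    exact Finset.sum_congr rfl (fun j _ => pderiv'_sq (hpd j))
  -- derivative of log H
  have hlog : ∀ i : Fin n, pderiv' (fun y => Real.log (σ y * ‖grad' u y‖ ^ 2)) i x
      = (b i * S + σ x * ∑ j, 2 * a j * c i j) / (σ x * S) := by
    intro i
    have hfe : (fun y => Real.log (σ y * ‖grad' u y‖ ^ 2))
        = fun y => Real.log (σ y * ∑ j, pderiv' u j y ^ 2) := by
      funext y; rw [norm_grad_sq]
    rw [hfe]
    have hHd : DifferentiableAt ℝ (fun y => σ y * ∑ j, pderiv' u j y ^ 2) x := hσd.mul hNd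
    have hH0 : σ x * ∑ j, pderiv' u j x ^ 2 ≠ 0 := by
      have : (∑ j, pderiv' u j x ^ 2) = S := rfl
      rw [this]; positivity
    rw [pderiv'_log hHd hH0, pderiv'_mul hσd hNd, hNder i]
  -- inner product term
  have hinner : (inner ℝ (grad' (fun y => Real.log (σ y * ‖grad' u y‖ ^ 2)) x) (grad' u x) : ℝ)
      = ∑ i, ((b i * S + σ x * ∑ j, 2 * a j * c i j) / (σ x * S)) * a i := by
    rw [inner_grad']
    exact Finset.sum_congr rfl (fun i _ => by rw [hlog i])
  rw [hinner, hS]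
  -- now pure algebra
  have expand1 : ∀ i : Fin n, ((b i * S + σ x * ∑ j, 2 * a j * c i j) / (σ x * S)) * a i
      = (b i * a i) / σ x + (∑ j, 2 * a j * c i j) * a i / S := by
    intro i
    field_simp
  rw [Finset.sum_congr rfl (fun i _ => expand1 i), Finset.sum_add_distrib]
  have expand2 : ∀ i : Fin n,
      (∑ j, ((if i = j then (1:ℝ) else 0) - 2 * a i * a j / S) * c i j)
      = c i i - (∑ j, 2 * a i * a j * c i j) / S := by
    intro i
    rw [Finset.sum_congr rfl (fun j _ => by
      show ((if i = j then (1:ℝ) else 0) - 2 * a i * a j / S) * c i j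
        = (if i = j then (1:ℝ) else 0) * c i j - 2 * a i * a j * c i j / S
      ring), Finset.sum_sub_distrib, ← Finset.sum_div]
    simp
  rw [Finset.sum_congr rfl (fun i _ => expand2 i), Finset.sum_sub_distrib]
  have h3 : ∑ i, (∑ j, 2 * a j * c i j) * a i / S = ∑ i, (∑ j, 2 * a i * a j * c i j) / S := by
    refine Finset.sum_congr rfl (fun i _ => ?_)
    rw [Finset.sum_mul, Finset.sum_div, Finset.sum_div]
    exact Finset.sum_congr rfl (fun j _ => by ring)
  rw [h3]
  have h5 : (∑ i, b i * a i) / σ x = - ∑ i, c i i := by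
    have hsum : ∑ i, b i * a i = - (σ x * ∑ i, c i i) := by
      have := hA
      rw [Finset.sum_add_distrib, ← Finset.mul_sum] at this
      linarith
    rw [hsum]
    field_simp
  rw [← Finset.sum_div, ← Finset.sum_div, h5]
  ring
end

section
/- Let S be a set and let P : (S → ℝ) → (S → ℝ) be an ℝ-linear map. Let u₀, ψ, σ₀ : S → ℝ satisfy P u₀ = σ₀ · u₀, P ψ = −σ₀ · ψ, σ₀(x) > 0 and u₀(x) > 0 for all x ∈ S. Let δ ∈ ℝ be such that |δ| · |ψ(x)| < u₀(x) for all x ∈ S. Define u_δ := u₀ + δψ, σ_δ := σ₀ (u₀ − δψ)/(u₀ + δψ), and H_δ := σ_δ · u_δ². Then: (i) P u_δ = σ_δ · u_δ; (ii) σ_δ(x) > 0 for all x; (iii) H_δ = H_{−δ} = σ₀ (u₀² − δ²ψ²); (iv) if δ ≠ 0 then σ_δ(x) ≠ σ_{−δ}(x) at every x with ψ(x) ≠ 0; and (v) u_δ(x) = u₀(x) and σ_δ(x) = σ₀(x) at every x with ψ(x) = 0. -/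
/-- Ambrosetti–Prodi-type non-uniqueness: if `P u₀ = σ₀ u₀` and `P ψ = −σ₀ ψ` with
`σ₀, u₀ > 0` and `|δ| |ψ| < u₀` pointwise, then `u_δ := u₀ + δψ` and
`σ_δ := σ₀ (u₀ − δψ)/(u₀ + δψ)` satisfy `P u_δ = σ_δ u_δ`, `σ_δ > 0`,
`H_δ := σ_δ u_δ² = H_{−δ} = σ₀(u₀² − δ²ψ²)`, `σ_δ ≠ σ_{−δ}` wherever `ψ ≠ 0` (for
`δ ≠ 0`), and `u_δ = u₀`, `σ_δ = σ₀` wherever `ψ = 0`. -/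
theorem ambrosetti_prodi_nonuniqueness {S : Type*}
    (P : (S → ℝ) →ₗ[ℝ] (S → ℝ)) (u₀ ψ σ₀ : S → ℝ)
    (hPu : P u₀ = fun x => σ₀ x * u₀ x)
    (hPψ : P ψ = fun x => -(σ₀ x * ψ x))
    (hσ₀ : ∀ x, 0 < σ₀ x) (hu₀ : ∀ x, 0 < u₀ x)
    (δ : ℝ) (hδ : ∀ x, |δ| * |ψ x| < u₀ x) :
    let uδ : ℝ → S → ℝ := fun d x => u₀ x + d * ψ x
    let σδ : ℝ → S → ℝ := fun d x => σ₀ x * (u₀ x - d * ψ x) / (u₀ x + d * ψ x)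
    let Hδ : ℝ → S → ℝ := fun d x => σδ d x * (uδ d x) ^ 2
    (P (uδ δ) = fun x => σδ δ x * uδ δ x) ∧
    (∀ x, 0 < σδ δ x) ∧
    (Hδ δ = Hδ (-δ) ∧ Hδ δ = fun x => σ₀ x * ((u₀ x) ^ 2 - δ ^ 2 * (ψ x) ^ 2)) ∧
    (δ ≠ 0 → ∀ x, ψ x ≠ 0 → σδ δ x ≠ σδ (-δ) x) ∧
    (∀ x, ψ x = 0 → uδ δ x = u₀ x ∧ σδ δ x = σ₀ x) := by
  intro uδ σδ Hδ
  have habs : ∀ x, |δ * ψ x| < u₀ x := by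
    intro x; rw [abs_mul]; exact hδ x
  have hplus : ∀ x, 0 < u₀ x + δ * ψ x := by
    intro x
    have h1 := neg_abs_le (δ * ψ x)
    have h2 := habs x
    linarith
  have hminus : ∀ x, 0 < u₀ x - δ * ψ x := by
    intro x
    have h1 := le_abs_self (δ * ψ x)
    have h2 := habs x
    linarith
  have hplus' : ∀ x, 0 < u₀ x + (-δ) * ψ x := by
    intro x; have := hminus x; linarith
  have key : ∀ d : ℝ, ∀ x, u₀ x + d * ψ x ≠ 0 →
      Hδ d x = σ₀ x * ((u₀ x) ^ 2 - d ^ 2 * (ψ x) ^ 2) := by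
    intro d x h
    simp only [Hδ, σδ, uδ]
    field_simp
    ring
  refine ⟨?_, ?_, ⟨?_, ?_⟩, ?_, ?_⟩
  · have heq : uδ δ = u₀ + δ • ψ := by
      funext x; simp [uδ, Pi.add_apply, Pi.smul_apply, smul_eq_mul]
    rw [heq, map_add, map_smul, hPu, hPψ]
    funext x
    have hne := (hplus x).ne'
    simp only [Pi.add_apply, Pi.smul_apply, smul_eq_mul, σδ, uδ]
    field_simp
    ring
  · intro x
    exact div_pos (mul_pos (hσ₀ x) (hminus x)) (hplus x)
  · funext x
    rw [key δ x (hplus x).ne', key (-δ) x (hplus' x).ne']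
    ring
  · funext x
    exact key δ x (hplus x).ne'
  · intro hδ0 x hψ h
    have h1 := (hplus x).ne'
    have h2 := (hplus' x).ne'
    simp only [σδ] at h
    rw [div_eq_div_iff h1 h2] at h
    have h3 : σ₀ x * u₀ x * (δ * ψ x) = 0 := by linear_combination (-1/4 : ℝ) * h
    rcases mul_eq_zero.mp h3 with h4 | h4
    · exact (mul_pos (hσ₀ x) (hu₀ x)).ne' h4
    · rcases mul_eq_zero.mp h4 with h5 | h5
      · exact hδ0 h5
      · exact hψ h5
  · intro x hψ
    simp [uδ, σδ, hψ, mul_div_assoc, div_self (hu₀ x).ne']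
end

section
/- Let 𝐤, 𝐥 ∈ ℝⁿ satisfy 𝐤 · 𝐥 = 0 and ‖𝐤‖ = ‖𝐥‖ = k > 0, and let α > 0. Define u₁(x) := e^{𝐤·x} sin(𝐥·x), u₂(x) := e^{𝐤·x} cos(𝐥·x), and β_α := u₁ ∇u₂ − α u₂ ∇u₁. Then for every x ∈ ℝⁿ: β_α(x) = k e^{2𝐤·x} [ (1−α) sin(𝐥·x) cos(𝐥·x) 𝐤̂ − ( sin²(𝐥·x) + α cos²(𝐥·x) ) 𝐥̂ ], and consequently ‖β_α(x)‖ ≥ min(1, α) · k e^{2𝐤·x} > 0. -/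
/-- Euclidean inner (dot) product. -/
noncomputable def ip {n : ℕ} (a b : EuclideanSpace ℝ (Fin n)) : ℝ := inner ℝ a b

lemma hasFDerivAt_ip {n : ℕ} (K x : EuclideanSpace ℝ (Fin n)) :
    HasFDerivAt (fun y => ip K y) (innerSL ℝ K) x :=
  (innerSL ℝ K).hasFDerivAt

lemma grad_exp_sin {n : ℕ} (K L x : EuclideanSpace ℝ (Fin n)) :
    grad' (fun y => Real.exp (ip K y) * Real.sin (ip L y)) x
      = (Real.exp (ip K x) * Real.sin (ip L x)) • K
        + (Real.exp (ip K x) * Real.cos (ip L x)) • L := by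
  have h : HasFDerivAt (fun y => Real.exp (ip K y) * Real.sin (ip L y))
      ((Real.exp (ip K x) • (Real.cos (ip L x) • innerSL ℝ L))
        + (Real.sin (ip L x) • (Real.exp (ip K x) • innerSL ℝ K))) x := by
    have h1 := (hasFDerivAt_ip K x).exp
    have h2 := (hasFDerivAt_ip L x).sin
    exact h1.mul h2
  have hf := h.fderiv
  ext i
  simp only [grad', EuclideanSpace.equiv, pderiv', hf]
  simp [ip, real_inner_comm, EuclideanSpace.inner_single_right, PiLp.add_apply,
    PiLp.smul_apply, smul_eq_mul]
  ring

lemma grad_exp_cos {n : ℕ} (K L x : EuclideanSpace ℝ (Fin n)) :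
    grad' (fun y => Real.exp (ip K y) * Real.cos (ip L y)) x
      = (Real.exp (ip K x) * Real.cos (ip L x)) • K
        - (Real.exp (ip K x) * Real.sin (ip L x)) • L := by
  have h : HasFDerivAt (fun y => Real.exp (ip K y) * Real.cos (ip L y))
      ((Real.exp (ip K x) • (-Real.sin (ip L x) • innerSL ℝ L))
        + (Real.cos (ip L x) • (Real.exp (ip K x) • innerSL ℝ K))) x := by
    have h1 := (hasFDerivAt_ip K x).exp
    have h2 := (hasFDerivAt_ip L x).cos
    exact h1.mul h2
  have hf := h.fderiv
  ext i
  simp only [grad', EuclideanSpace.equiv, pderiv', hf]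
  simp [ip, real_inner_comm, EuclideanSpace.inner_single_right, PiLp.add_apply,
    PiLp.sub_apply, PiLp.smul_apply, smul_eq_mul]
  ring


/-- Lower bound for the vector field `β_α = u₁∇u₂ − α u₂∇u₁` built from the real and
imaginary parts `u₂ = e^{𝐤·x}cos(𝐥·x)`, `u₁ = e^{𝐤·x}sin(𝐥·x)` of a harmonic CGO
solution: `β_α = k e^{2𝐤·x}[(1−α) sin cos 𝐤̂ − (sin² + α cos²) 𝐥̂]` and
`‖β_α‖ ≥ min(1,α) k e^{2𝐤·x} > 0`. -/
theorem cgo_beta_alpha_lower_bound {n : ℕ} (K L : EuclideanSpace ℝ (Fin n)) (k : ℝ)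
    (horth : ip K L = 0) (hK : ‖K‖ = k) (hL : ‖L‖ = k) (hk : 0 < k)
    (α : ℝ) (hα : 0 < α) :
    let u₁ : EuclideanSpace ℝ (Fin n) → ℝ := fun x => Real.exp (ip K x) * Real.sin (ip L x)
    let u₂ : EuclideanSpace ℝ (Fin n) → ℝ := fun x => Real.exp (ip K x) * Real.cos (ip L x)
    let β : EuclideanSpace ℝ (Fin n) → EuclideanSpace ℝ (Fin n) :=
      fun x => u₁ x • grad' u₂ x - (α * u₂ x) • grad' u₁ x
    ∀ x : EuclideanSpace ℝ (Fin n),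
      β x = (k * Real.exp (2 * ip K x)) •
          (((1 - α) * Real.sin (ip L x) * Real.cos (ip L x)) • (k⁻¹ • K)
            - (Real.sin (ip L x) ^ 2 + α * Real.cos (ip L x) ^ 2) • (k⁻¹ • L)) ∧
      min 1 α * (k * Real.exp (2 * ip K x)) ≤ ‖β x‖ ∧
      0 < min 1 α * (k * Real.exp (2 * ip K x)) := by
  intro u₁ u₂ β x
  set s := Real.sin (ip L x) with hs
  set c := Real.cos (ip L x) with hc
  set E := Real.exp (ip K x) with hE
  have hE2 : Real.exp (2 * ip K x) = E * E := by
    rw [two_mul, Real.exp_add]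
  have hb : β x = (E * E) • ((((1 - α) * s * c) • K) - ((s ^ 2 + α * c ^ 2) • L)) := by
    show u₁ x • grad' u₂ x - (α * u₂ x) • grad' u₁ x = _
    rw [show grad' u₂ = grad' (fun y => Real.exp (ip K y) * Real.cos (ip L y)) from rfl,
      show grad' u₁ = grad' (fun y => Real.exp (ip K y) * Real.sin (ip L y)) from rfl,
      grad_exp_cos, grad_exp_sin]
    show (E * s) • ((E * c) • K - (E * s) • L) - (α * (E * c)) • ((E * s) • K + (E * c) • L) = _
    ext i
    simp only [PiLp.sub_apply, PiLp.add_apply, PiLp.smul_apply, smul_eq_mul]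
    ring
  have hmin : 0 < min 1 α := lt_min one_pos hα
  have hpos : 0 < min 1 α * (k * Real.exp (2 * ip K x)) := by positivity
  refine ⟨?_, ?_, hpos⟩
  · rw [hb, hE2]
    ext i
    simp only [PiLp.sub_apply, PiLp.smul_apply, smul_eq_mul]
    field_simp
  · -- lower bound via inner product with L
    have hLK : (inner ℝ L K : ℝ) = 0 := by
      rw [real_inner_comm]; exact horth
    have hLL : (inner ℝ L L : ℝ) = k ^ 2 := by
      rw [real_inner_self_eq_norm_sq, hL]
    have hinner : (inner ℝ L (β x) : ℝ) = -((E * E) * (s ^ 2 + α * c ^ 2) * k ^ 2) := by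
      rw [hb, real_inner_smul_right, inner_sub_right, real_inner_smul_right,
        real_inner_smul_right, hLK, hLL]
      ring
    have hcs : |(inner ℝ L (β x) : ℝ)| ≤ ‖L‖ * ‖β x‖ := abs_real_inner_le_norm L (β x)
    have hbnn : 0 ≤ s ^ 2 + α * c ^ 2 := by positivity
    have habs : |(inner ℝ L (β x) : ℝ)| = (E * E) * (s ^ 2 + α * c ^ 2) * k ^ 2 := by
      rw [hinner, abs_neg, abs_of_nonneg (by positivity)]
    rw [habs, hL] at hcs
    have hmin_le : min 1 α ≤ s ^ 2 + α * c ^ 2 := by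
      have h1 : min 1 α * (s ^ 2 + c ^ 2) ≤ s ^ 2 + α * c ^ 2 := by
        have := min_le_left 1 α
        have := min_le_right 1 α
        nlinarith [sq_nonneg s, sq_nonneg c]
      rwa [Real.sin_sq_add_cos_sq, mul_one] at h1
    have key : (E * E) * (s ^ 2 + α * c ^ 2) * k ≤ ‖β x‖ := by
      have hk' : k ≠ 0 := ne_of_gt hk
      nlinarith [hcs, norm_nonneg (β x)]
    calc min 1 α * (k * Real.exp (2 * ip K x))
        = min 1 α * (k * (E * E)) := by rw [hE2]
      _ ≤ (s ^ 2 + α * c ^ 2) * (k * (E * E)) := by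
          have : 0 < k * (E * E) := by positivity
          exact mul_le_mul_of_nonneg_right hmin_le this.le
      _ = (E * E) * (s ^ 2 + α * c ^ 2) * k := by ring
      _ ≤ ‖β x‖ := key
end

section
/- For t ∈ ℝ define the vectors in ℝ³ (coordinates in the standard orthonormal basis e₁, e₂, e₃): S₁(t) = −sin t · e₁ + cos t · e₂, S₂(t) = cos t · e₁ + sin t · e₂, S₃(t) = −sin t · e₁ + cos t · e₃, S₄(t) = cos t · e₂ + sin t · e₃. Then det(S₁(t), S₂(t), S₃(t)) = −cos t and det(S₁(t), S₂(t), S₄(t)) = −sin t for all t, and consequently max( |det(S₁, S₂, S₃)|, |det(S₁, S₂, S₄)| ) ≥ √2/2 for every t ∈ ℝ. -/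
open Matrix

/-- Determinants of the leading-order CGO gradient frames in 3D:
`det(S₁,S₂,S₃) = −cos t`, `det(S₁,S₂,S₄) = −sin t`, so at each `t` the larger of the two
determinants (in absolute value) is at least `√2/2`. -/
theorem cgo_determinants_lower_bound (t : ℝ) :
    let e₁ : Fin 3 → ℝ := ![1, 0, 0]
    let e₂ : Fin 3 → ℝ := ![0, 1, 0]
    let e₃ : Fin 3 → ℝ := ![0, 0, 1]
    let S₁ : Fin 3 → ℝ := (-Real.sin t) • e₁ + Real.cos t • e₂
    let S₂ : Fin 3 → ℝ := Real.cos t • e₁ + Real.sin t • e₂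
    let S₃ : Fin 3 → ℝ := (-Real.sin t) • e₁ + Real.cos t • e₃
    let S₄ : Fin 3 → ℝ := Real.cos t • e₂ + Real.sin t • e₃
    det (Matrix.of ![S₁, S₂, S₃]) = -Real.cos t ∧
    det (Matrix.of ![S₁, S₂, S₄]) = -Real.sin t ∧
    Real.sqrt 2 / 2 ≤
      max |det (Matrix.of ![S₁, S₂, S₃])| |det (Matrix.of ![S₁, S₂, S₄])| := by
  intro e₁ e₂ e₃ S₁ S₂ S₃ S₄
  have h1 : det (Matrix.of ![S₁, S₂, S₃]) = -Real.cos t := by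
    simp only [Matrix.det_fin_three, Matrix.of_apply, Matrix.cons_val', Matrix.cons_val_zero,
      Matrix.cons_val_one, Matrix.head_cons, Matrix.head_fin_const, Matrix.cons_val_two,
      Matrix.tail_cons, S₁, S₂, S₃, e₁, e₂, e₃, Pi.add_apply, Pi.smul_apply, smul_eq_mul]
    simp [Matrix.cons_val_zero, Matrix.cons_val_one]
    linear_combination (-Real.cos t) * Real.sin_sq_add_cos_sq t
  have h2 : det (Matrix.of ![S₁, S₂, S₄]) = -Real.sin t := by
    simp only [Matrix.det_fin_three, Matrix.of_apply, Matrix.cons_val', Matrix.cons_val_zero,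
      Matrix.cons_val_one, Matrix.head_cons, Matrix.head_fin_const, Matrix.cons_val_two,
      Matrix.tail_cons, S₁, S₂, S₄, e₁, e₂, e₃, Pi.add_apply, Pi.smul_apply, smul_eq_mul]
    simp [Matrix.cons_val_zero, Matrix.cons_val_one]
    linear_combination (-Real.sin t) * Real.sin_sq_add_cos_sq t
  refine ⟨h1, h2, ?_⟩
  rw [h1, h2, abs_neg, abs_neg]
  set m := max |Real.cos t| |Real.sin t| with hm
  have hc : |Real.cos t| ≤ m := le_max_left _ _
  have hs : |Real.sin t| ≤ m := le_max_right _ _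
  have hm0 : 0 ≤ m := le_trans (abs_nonneg _) hc
  have h2' : (Real.sqrt 2) ^ 2 = 2 := Real.sq_sqrt (by norm_num)
  have hsq : 1 ≤ 2 * m ^ 2 := by
    nlinarith [Real.sin_sq_add_cos_sq t, sq_abs (Real.cos t), sq_abs (Real.sin t),
      abs_nonneg (Real.cos t), abs_nonneg (Real.sin t)]
  nlinarith [Real.sqrt_nonneg 2]
end

section
/- Let Ω ⊆ ℝⁿ be open, let σ₁, σ₂ : Ω → ℝ be continuous with σⱼ > 0 on Ω, and let u₁, u₂ : Ω → ℝ be twice continuously differentiable with uⱼ > 0 on Ω, satisfying Δuⱼ = σⱼ uⱼ on Ω for j = 1, 2. If σ₁ u₁² = σ₂ u₂² on Ω, then σ₁ u₁ − σ₂ u₂ = √(σ₁σ₂) (u₂ − u₁) pointwise, and hence the difference w := u₁ − u₂ satisfies Δw + √(σ₁σ₂) w = 0 on Ω. -/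
/-- Laplacian `Δf = ∑ᵢ ∂²f/∂xᵢ²` of a scalar function on Euclidean space. -/
noncomputable def lap {n : ℕ} (f : EuclideanSpace ℝ (Fin n) → ℝ)
    (x : EuclideanSpace ℝ (Fin n)) : ℝ :=
  ∑ i, pderiv' (pderiv' f i) i x

lemma pderiv'_differentiableAt {n : ℕ} {f : EuclideanSpace ℝ (Fin n) → ℝ}
    {Ω : Set (EuclideanSpace ℝ (Fin n))} (hΩ : IsOpen Ω) (hf : ContDiffOn ℝ 2 f Ω)
    (i : Fin n) {x : EuclideanSpace ℝ (Fin n)} (hx : x ∈ Ω) :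
    DifferentiableAt ℝ (pderiv' f i) x := by
  have h1 : ContDiffOn ℝ 1 (fderiv ℝ f) Ω :=
    hf.fderiv_of_isOpen hΩ (by norm_num)
  have h2 : ContDiffOn ℝ 1 (pderiv' f i) Ω := by
    have := (ContinuousLinearMap.apply ℝ ℝ
      (EuclideanSpace.single i (1 : ℝ))).contDiff.comp_contDiffOn h1
    exact this
  exact (h2.differentiableOn one_ne_zero).differentiableAt (hΩ.mem_nhds hx)

lemma lap_sub {n : ℕ} {f g : EuclideanSpace ℝ (Fin n) → ℝ}
    {Ω : Set (EuclideanSpace ℝ (Fin n))} (hΩ : IsOpen Ω) (hf : ContDiffOn ℝ 2 f Ω)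
    (hg : ContDiffOn ℝ 2 g Ω) {x : EuclideanSpace ℝ (Fin n)} (hx : x ∈ Ω) :
    lap (fun y => f y - g y) x = lap f x - lap g x := by
  have hmem : Ω ∈ nhds x := hΩ.mem_nhds hx
  have hdf : ∀ y ∈ Ω, DifferentiableAt ℝ f y := fun y hy =>
    ((hf.differentiableOn (by norm_num)).differentiableAt (hΩ.mem_nhds hy))
  have hdg : ∀ y ∈ Ω, DifferentiableAt ℝ g y := fun y hy =>
    ((hg.differentiableOn (by norm_num)).differentiableAt (hΩ.mem_nhds hy))
  unfold lap
  rw [← Finset.sum_sub_distrib]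
  refine Finset.sum_congr rfl fun i _ => ?_
  -- First derivative: eventually equal to difference of derivatives
  have hev : (pderiv' (fun y => f y - g y) i) =ᶠ[nhds x]
      (fun y => pderiv' f i y - pderiv' g i y) := by
    filter_upwards [hmem] with y hy
    unfold pderiv'
    rw [fderiv_fun_sub (hdf y hy) (hdg y hy)]
    simp
  have hDf := pderiv'_differentiableAt hΩ hf i hx
  have hDg := pderiv'_differentiableAt hΩ hg i hx
  have h3 : pderiv' (pderiv' (fun y => f y - g y) i) i x
      = fderiv ℝ (fun y => pderiv' f i y - pderiv' g i y) x (EuclideanSpace.single i 1) := by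
    show fderiv ℝ (pderiv' (fun y => f y - g y) i) x (EuclideanSpace.single i 1) = _
    rw [hev.fderiv_eq]
  rw [h3, fderiv_fun_sub hDf hDg]
  rfl

/-- If `Δuⱼ = σⱼ uⱼ` with `σⱼ, uⱼ > 0` on an open set `Ω` and the internal measurements
coincide, `σ₁u₁² = σ₂u₂²`, then `σ₁u₁ − σ₂u₂ = √(σ₁σ₂)(u₂ − u₁)` and the difference
`w = u₁ − u₂` satisfies `Δw + √(σ₁σ₂) w = 0` on `Ω`. -/
theorem acousto_optic_difference_equation {n : ℕ} (Ω : Set (EuclideanSpace ℝ (Fin n)))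
    (hΩ : IsOpen Ω) (σ₁ σ₂ u₁ u₂ : EuclideanSpace ℝ (Fin n) → ℝ)
    (hσ₁ : ContinuousOn σ₁ Ω) (hσ₂ : ContinuousOn σ₂ Ω)
    (hσ₁pos : ∀ x ∈ Ω, 0 < σ₁ x) (hσ₂pos : ∀ x ∈ Ω, 0 < σ₂ x)
    (hu₁ : ContDiffOn ℝ 2 u₁ Ω) (hu₂ : ContDiffOn ℝ 2 u₂ Ω)
    (hu₁pos : ∀ x ∈ Ω, 0 < u₁ x) (hu₂pos : ∀ x ∈ Ω, 0 < u₂ x)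
    (heq₁ : ∀ x ∈ Ω, lap u₁ x = σ₁ x * u₁ x)
    (heq₂ : ∀ x ∈ Ω, lap u₂ x = σ₂ x * u₂ x)
    (hH : ∀ x ∈ Ω, σ₁ x * u₁ x ^ 2 = σ₂ x * u₂ x ^ 2) :
    ∀ x ∈ Ω,
      σ₁ x * u₁ x - σ₂ x * u₂ x = Real.sqrt (σ₁ x * σ₂ x) * (u₂ x - u₁ x) ∧
      lap (fun y => u₁ y - u₂ y) x + Real.sqrt (σ₁ x * σ₂ x) * (u₁ x - u₂ x) = 0 := by
  intro x hx
  have h1 := hσ₁pos x hx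
  have h2 := hσ₂pos x hx
  have hu1 := hu₁pos x hx
  have hu2 := hu₂pos x hx
  -- √σ₁ u₁ = √σ₂ u₂
  have key : Real.sqrt (σ₁ x) * u₁ x = Real.sqrt (σ₂ x) * u₂ x := by
    have h := hH x hx
    have e1 : Real.sqrt (σ₁ x * u₁ x ^ 2) = Real.sqrt (σ₁ x) * u₁ x := by
      rw [Real.sqrt_mul h1.le, Real.sqrt_sq hu1.le]
    have e2 : Real.sqrt (σ₂ x * u₂ x ^ 2) = Real.sqrt (σ₂ x) * u₂ x := by
      rw [Real.sqrt_mul h2.le, Real.sqrt_sq hu2.le]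
    rw [← e1, ← e2, h]
  have hs1 : Real.sqrt (σ₁ x) * Real.sqrt (σ₁ x) = σ₁ x := Real.mul_self_sqrt h1.le
  have hs2 : Real.sqrt (σ₂ x) * Real.sqrt (σ₂ x) = σ₂ x := Real.mul_self_sqrt h2.le
  have hsmul : Real.sqrt (σ₁ x * σ₂ x) = Real.sqrt (σ₁ x) * Real.sqrt (σ₂ x) :=
    Real.sqrt_mul h1.le _
  have main : σ₁ x * u₁ x - σ₂ x * u₂ x = Real.sqrt (σ₁ x * σ₂ x) * (u₂ x - u₁ x) := by
    rw [hsmul]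
    calc σ₁ x * u₁ x - σ₂ x * u₂ x
        = Real.sqrt (σ₁ x) * (Real.sqrt (σ₁ x) * u₁ x)
          - Real.sqrt (σ₂ x) * (Real.sqrt (σ₂ x) * u₂ x) := by
          rw [← mul_assoc, ← mul_assoc, hs1, hs2]
      _ = Real.sqrt (σ₁ x) * (Real.sqrt (σ₂ x) * u₂ x)
          - Real.sqrt (σ₂ x) * (Real.sqrt (σ₁ x) * u₁ x) := by rw [key, ← key]
      _ = Real.sqrt (σ₁ x) * Real.sqrt (σ₂ x) * (u₂ x - u₁ x) := by ring
  refine ⟨main, ?_⟩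
  rw [lap_sub hΩ hu₁ hu₂ hx, heq₁ x hx, heq₂ x hx]
  have : Real.sqrt (σ₁ x * σ₂ x) * (u₁ x - u₂ x)
      = -(σ₁ x * u₁ x - σ₂ x * u₂ x) := by rw [main]; ring
  rw [this]; ring
end
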